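/- (Corollary 4.8) MIA-refinement is compositional with respect to MIA-conjunction: for Modal Interface Automata with common input and output alphabets and states p, q, r, if p ⊑_MIA q and p ∧ r is defined, then q ∧ r is defined and p ∧ r ⊑_MIA q ∧ r. -/

import Mathlib

/-- Transition labels: `none` is the silent action τ, `some a` a visible action. -/
abbrev Lbl (A : Type) : Type := Option A

/-- Weak internal transition: a (possibly empty) sequence of τ-steps. -/
def WeakEps {S A : Type} (tr : S → Lbl A → S → Prop) : S → S → Prop :=
  Relation.ReflTransGen (fun p q => tr p none q)

/-- Weak transition: τ-steps followed by one step labelled `α`. -/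
def WeakTr {S A : Type} (tr : S → Lbl A → S → Prop) (p : S) (α : Lbl A) (p' : S) : Prop :=
  ∃ p'', WeakEps tr p p'' ∧ tr p'' α p'

/-- State set of binary compositions: copies of both components plus combined states. -/
inductive CState (S T : Type) : Type
  | left : S → CState S T
  | right : T → CState S T
  | comb : S → T → CState S T

/-- `(must, may)` is a Modal Interface Automaton over inputs `I` and outputs `O`:
a syntactically consistent dMTS with labels in `I ∪ O`, at most one (disjunctive)
must-transition per input, and every input-may-transition underlies it. -/
def IsMIA {S A : Type} (I O : Set A) (must : S → A → Set S → Prop)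
    (may : S → Lbl A → S → Prop) : Prop :=
  Disjoint I O ∧
  (∀ s a S', must s a S' → S'.Nonempty) ∧
  (∀ s a S' s', must s a S' → s' ∈ S' → may s (some a) s') ∧
  (∀ s a S', must s a S' → a ∈ I ∪ O) ∧
  (∀ s a s', may s (some a) s' → a ∈ I ∪ O) ∧
  (∀ s i S' S'', i ∈ I → must s i S' → must s i S'' → S' = S'') ∧
  (∀ s i s', i ∈ I → may s (some i) s' → ∃ S', must s i S' ∧ s' ∈ S')

/-- Observational MIA-refinement relation: like modal refinement, but
may-transitions only need to be matched for outputs and τ. -/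
def IsMIASim {S T A : Type} (O : Set A) (mustP : S → A → Set S → Prop)
    (mayP : S → Lbl A → S → Prop) (mustQ : T → A → Set T → Prop)
    (mayQ : T → Lbl A → T → Prop) (R : S → T → Prop) : Prop :=
  ∀ p q, R p q →
    (∀ a Q', mustQ q a Q' → ∃ P', mustP p a P' ∧ ∀ p' ∈ P', ∃ q' ∈ Q', R p' q') ∧
    (∀ a p', a ∈ O → mayP p (some a) p' → ∃ q', WeakTr mayQ q (some a) q' ∧ R p' q') ∧
    (∀ p', mayP p none p' → ∃ q', WeakEps mayQ q q' ∧ R p' q')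

/-- MIA-refinement `p ⊑_MIA q`. -/
def MIARef {S T A : Type} (O : Set A) (mustP : S → A → Set S → Prop)
    (mayP : S → Lbl A → S → Prop) (mustQ : T → A → Set T → Prop)
    (mayQ : T → Lbl A → T → Prop) (p : S) (q : T) : Prop :=
  ∃ R, IsMIASim O mustP mayP mustQ mayQ R ∧ R p q

/-- Must-transitions of the MIA conjunctive product `P & Q`
(rules (OMust1), (OMust2), (IMust1)-(IMust3) plus inherited ones). -/
inductive MConjMust {S T A : Type} (I O : Set A) (mustP : S → A → Set S → Prop)
    (mayP : S → Lbl A → S → Prop) (mustQ : T → A → Set T → Prop)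
    (mayQ : T → Lbl A → T → Prop) : CState S T → A → Set (CState S T) → Prop
  | fromP {p a P'} : mustP p a P' →
      MConjMust I O mustP mayP mustQ mayQ (CState.left p) a (CState.left '' P')
  | fromQ {q a Q'} : mustQ q a Q' →
      MConjMust I O mustP mayP mustQ mayQ (CState.right q) a (CState.right '' Q')
  | omust1 {p q o P'} : o ∈ O → mustP p o P' → (∃ q', WeakTr mayQ q (some o) q') →
      MConjMust I O mustP mayP mustQ mayQ (CState.comb p q) o
        {x | ∃ p' q', x = CState.comb p' q' ∧ p' ∈ P' ∧ WeakTr mayQ q (some o) q'}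
  | omust2 {p q o Q'} : o ∈ O → (∃ p', WeakTr mayP p (some o) p') → mustQ q o Q' →
      MConjMust I O mustP mayP mustQ mayQ (CState.comb p q) o
        {x | ∃ p' q', x = CState.comb p' q' ∧ WeakTr mayP p (some o) p' ∧ q' ∈ Q'}
  | imust1 {p q i P'} : i ∈ I → mustP p i P' → ¬ (∃ Q', mustQ q i Q') →
      MConjMust I O mustP mayP mustQ mayQ (CState.comb p q) i (CState.left '' P')
  | imust2 {p q i Q'} : i ∈ I → ¬ (∃ P', mustP p i P') → mustQ q i Q' →
      MConjMust I O mustP mayP mustQ mayQ (CState.comb p q) i (CState.right '' Q')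
  | imust3 {p q i P' Q'} : i ∈ I → mustP p i P' → mustQ q i Q' →
      MConjMust I O mustP mayP mustQ mayQ (CState.comb p q) i
        {x | ∃ p' q', x = CState.comb p' q' ∧ p' ∈ P' ∧ q' ∈ Q'}

/-- May-transitions of the MIA conjunctive product `P & Q`
(rules (May1)-(May3), (IMay1)-(IMay3) plus inherited ones). -/
inductive MConjMay {S T A : Type} (I O : Set A) (mayP : S → Lbl A → S → Prop)
    (mayQ : T → Lbl A → T → Prop) : CState S T → Lbl A → CState S T → Prop
  | fromP {p α p'} : mayP p α p' → MConjMay I O mayP mayQ (CState.left p) α (CState.left p')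
  | fromQ {q α q'} : mayQ q α q' → MConjMay I O mayP mayQ (CState.right q) α (CState.right q')
  | may1 {p q p'} : WeakTr mayP p none p' →
      MConjMay I O mayP mayQ (CState.comb p q) none (CState.comb p' q)
  | may2 {p q q'} : WeakTr mayQ q none q' →
      MConjMay I O mayP mayQ (CState.comb p q) none (CState.comb p q')
  | may3 {p q α p' q'} : (∀ x, α = some x → x ∈ O) → WeakTr mayP p α p' →
      WeakTr mayQ q α q' → MConjMay I O mayP mayQ (CState.comb p q) α (CState.comb p' q')
  | imay1 {p q i p'} : i ∈ I → mayP p (some i) p' → ¬ (∃ q', mayQ q (some i) q') →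
      MConjMay I O mayP mayQ (CState.comb p q) (some i) (CState.left p')
  | imay2 {p q i q'} : i ∈ I → ¬ (∃ p', mayP p (some i) p') → mayQ q (some i) q' →
      MConjMay I O mayP mayQ (CState.comb p q) (some i) (CState.right q')
  | imay3 {p q i p' q'} : i ∈ I → mayP p (some i) p' → mayQ q (some i) q' →
      MConjMay I O mayP mayQ (CState.comb p q) (some i) (CState.comb p' q')

/-- The set `F` of logically inconsistent states of the MIA conjunctive product
(rules (F1)-(F3)); only combined states `p ∧ q` can be inconsistent. -/
inductive MIncons {S T A : Type} (I O : Set A) (mustP : S → A → Set S → Prop)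
    (mayP : S → Lbl A → S → Prop) (mustQ : T → A → Set T → Prop)
    (mayQ : T → Lbl A → T → Prop) : CState S T → Prop
  | f1 {p q o P'} : o ∈ O → mustP p o P' → ¬ (∃ q', WeakTr mayQ q (some o) q') →
      MIncons I O mustP mayP mustQ mayQ (CState.comb p q)
  | f2 {p q o Q'} : o ∈ O → ¬ (∃ p', WeakTr mayP p (some o) p') → mustQ q o Q' →
      MIncons I O mustP mayP mustQ mayQ (CState.comb p q)
  | f3 {p q a R'} : MConjMust I O mustP mayP mustQ mayQ (CState.comb p q) a R' →
      (∀ x ∈ R', MIncons I O mustP mayP mustQ mayQ x) →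
      MIncons I O mustP mayP mustQ mayQ (CState.comb p q)

/-- Must-transitions of the MIA-conjunction `P ∧ Q`: the product pruned of
inconsistent states (which are also removed from targets). -/
def MAndMust {S T A : Type} (I O : Set A) (mustP : S → A → Set S → Prop)
    (mayP : S → Lbl A → S → Prop) (mustQ : T → A → Set T → Prop)
    (mayQ : T → Lbl A → T → Prop) (s : CState S T) (a : A) (R'' : Set (CState S T)) : Prop :=
  ¬ MIncons I O mustP mayP mustQ mayQ s ∧
  ∃ R', MConjMust I O mustP mayP mustQ mayQ s a R' ∧
    R'' = {x ∈ R' | ¬ MIncons I O mustP mayP mustQ mayQ x}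

/-- May-transitions of the MIA-conjunction `P ∧ Q`. -/
def MAndMay {S T A : Type} (I O : Set A) (mustP : S → A → Set S → Prop)
    (mayP : S → Lbl A → S → Prop) (mustQ : T → A → Set T → Prop)
    (mayQ : T → Lbl A → T → Prop) (s : CState S T) (α : Lbl A) (s' : CState S T) : Prop :=
  ¬ MIncons I O mustP mayP mustQ mayQ s ∧ ¬ MIncons I O mustP mayP mustQ mayQ s' ∧
  MConjMay I O mayP mayQ s α s'

section Aux

variable {A S T U : Type} {I O : Set A}
variable {mustP : S → A → Set S → Prop} {mayP : S → Lbl A → S → Prop}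
variable {mustQ : T → A → Set T → Prop} {mayQ : T → Lbl A → T → Prop}
variable {mustR : U → A → Set U → Prop} {mayR : U → Lbl A → U → Prop}
variable {R : S → T → Prop}

lemma incons_comb' {V W : Type} {mV : V → A → Set V → Prop} {maV : V → Lbl A → V → Prop}
    {mW : W → A → Set W → Prop} {maW : W → Lbl A → W → Prop} {s : CState V W}
    (h : MIncons I O mV maV mW maW s) : ∃ a b, s = CState.comb a b := by
  cases h <;> exact ⟨_, _, rfl⟩

lemma not_incons_left {V W : Type} {mV : V → A → Set V → Prop} {maV : V → Lbl A → V → Prop}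
    {mW : W → A → Set W → Prop} {maW : W → Lbl A → W → Prop} {x : V} :
    ¬ MIncons I O mV maV mW maW (CState.left (T := W) x) := by
  intro h; obtain ⟨a, b, hb⟩ := incons_comb' h; exact nomatch hb

lemma not_incons_right {V W : Type} {mV : V → A → Set V → Prop} {maV : V → Lbl A → V → Prop}
    {mW : W → A → Set W → Prop} {maW : W → Lbl A → W → Prop} {x : W} :
    ¬ MIncons I O mV maV mW maW (CState.right (S := V) x) := by
  intro h; obtain ⟨a, b, hb⟩ := incons_comb' h; exact nomatch hb

lemma weakEps_map {V W : Type} {r : V → Lbl A → V → Prop} {r' : W → Lbl A → W → Prop}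
    (f : V → W) (hf : ∀ a b, r a none b → r' (f a) none (f b)) {s s' : V}
    (h : WeakEps r s s') : WeakEps r' (f s) (f s') := by
  induction h with
  | refl => exact Relation.ReflTransGen.refl
  | tail _ hbc ih => exact Relation.ReflTransGen.tail ih (hf _ _ hbc)

lemma weakTr_map {V W : Type} {r : V → Lbl A → V → Prop} {r' : W → Lbl A → W → Prop}
    (f : V → W) (hf : ∀ a α b, r a α b → r' (f a) α (f b)) {s s' : V} {α : Lbl A}
    (h : WeakTr r s α s') : WeakTr r' (f s) α (f s') := by
  obtain ⟨m, he, hs⟩ := h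
  exact ⟨f m, weakEps_map f (fun a b hab => hf a none b hab) he, hf _ _ _ hs⟩

lemma weakTr_none_eps {V : Type} {r : V → Lbl A → V → Prop} {s s' : V}
    (h : WeakTr r s none s') : WeakEps r s s' := by
  obtain ⟨m, he, hs⟩ := h
  exact he.tail hs

lemma weakEps_cases {V : Type} {r : V → Lbl A → V → Prop} {s s' : V}
    (h : WeakEps r s s') : s = s' ∨ WeakTr r s none s' := by
  induction h with
  | refl => exact Or.inl rfl
  | tail hab hbc ih =>
    rcases ih with rfl | ⟨m, he, hs⟩
    · exact Or.inr ⟨_, Relation.ReflTransGen.refl, hbc⟩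
    · exact Or.inr ⟨_, he.tail hs, hbc⟩

lemma sim_eps (hsim : IsMIASim O mustP mayP mustQ mayQ R)
    {p p' : S} {q : T} (h : WeakEps mayP p p') (hpq : R p q) :
    ∃ q', WeakEps mayQ q q' ∧ R p' q' := by
  induction h with
  | refl => exact ⟨q, Relation.ReflTransGen.refl, hpq⟩
  | tail hab hbc ih =>
    obtain ⟨q₁, he, hr⟩ := ih
    obtain ⟨q₂, he₂, hr₂⟩ := (hsim _ _ hr).2.2 _ hbc
    exact ⟨q₂, he.trans he₂, hr₂⟩

lemma sim_weakout (hsim : IsMIASim O mustP mayP mustQ mayQ R) {o : A} (hO : o ∈ O)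
    {p p' : S} {q : T} (h : WeakTr mayP p (some o) p') (hpq : R p q) :
    ∃ q', WeakTr mayQ q (some o) q' ∧ R p' q' := by
  obtain ⟨m, he, hs⟩ := h
  obtain ⟨q₁, he₁, hr₁⟩ := sim_eps hsim he hpq
  obtain ⟨q', ⟨q₂, he₂, hs₂⟩, hr'⟩ := (hsim _ _ hr₁).2.1 o _ hO hs
  exact ⟨q', ⟨q₂, he₁.trans he₂, hs₂⟩, hr'⟩

lemma sim_weaknone (hsim : IsMIASim O mustP mayP mustQ mayQ R)
    {p p' : S} {q : T} (h : WeakTr mayP p none p') (hpq : R p q) :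
    ∃ q', WeakEps mayQ q q' ∧ R p' q' := by
  obtain ⟨m, he, hs⟩ := h
  obtain ⟨q₁, he₁, hr₁⟩ := sim_eps hsim he hpq
  obtain ⟨q', he₂, hr'⟩ := (hsim _ _ hr₁).2.2 _ hs
  exact ⟨q', he₁.trans he₂, hr'⟩

lemma incons_mono (hsim : IsMIASim O mustP mayP mustQ mayQ R)
    (hQne : ∀ s a S', mustQ s a S' → S'.Nonempty)
    (hRne : ∀ s a S', mustR s a S' → S'.Nonempty)
    {s : CState T U} (h : MIncons I O mustQ mayQ mustR mayR s) :
    ∀ p q r, s = CState.comb q r → R p q →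
      MIncons I O mustP mayP mustR mayR (CState.comb p r) := by
  induction h with
  | @f1 q1 r1 o Q' hO hm hno =>
    intro p q r heq hpq
    injection heq with h1 h2; subst h1; subst h2
    obtain ⟨P₀, hmp, -⟩ := (hsim _ _ hpq).1 o Q' hm
    exact MIncons.f1 hO hmp hno
  | @f2 q1 r1 o Q' hO hno hm =>
    intro p q r heq hpq
    injection heq with h1 h2; subst h1; subst h2
    refine MIncons.f2 hO ?_ hm
    rintro ⟨p', hw⟩
    obtain ⟨q', hwq, -⟩ := sim_weakout hsim hO hw hpq
    exact hno ⟨q', hwq⟩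
  | @f3 q1 r1 a R' hm hall ih =>
    intro p q r heq hpq
    injection heq with h1 h2; subst h1; subst h2
    cases hm with
    | omust1 hO hmq hex =>
      obtain ⟨P₀, hmp, hrel⟩ := (hsim _ _ hpq).1 _ _ hmq
      refine MIncons.f3 (MConjMust.omust1 hO hmp hex) ?_
      rintro x ⟨p', r', rfl, hp', hwr'⟩
      obtain ⟨q', hq', hrpq'⟩ := hrel p' hp'
      exact ih _ ⟨q', r', rfl, hq', hwr'⟩ p' q' r' rfl hrpq'
    | omust2 hO hexq hmr =>
      by_cases hexp : ∃ p', WeakTr mayP p (some a) p'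
      · obtain ⟨p₀, hw₀⟩ := hexp
        refine MIncons.f3 (MConjMust.omust2 hO ⟨p₀, hw₀⟩ hmr) ?_
        rintro x ⟨p', r', rfl, hwp', hr'⟩
        obtain ⟨q', hwq', hrel'⟩ := sim_weakout hsim hO hwp' hpq
        exact ih _ ⟨q', r', rfl, hwq', hr'⟩ p' q' r' rfl hrel'
      · exact MIncons.f2 hO hexp hmr
    | imust1 hI hmq hno =>
      obtain ⟨q', hq'⟩ := hQne _ _ _ hmq
      exact absurd (hall _ ⟨q', hq', rfl⟩) not_incons_left
    | imust2 hI hno hmr =>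
      obtain ⟨r', hr'⟩ := hRne _ _ _ hmr
      exact absurd (hall _ ⟨r', hr', rfl⟩) not_incons_right
    | imust3 hI hmq hmr =>
      obtain ⟨P₀, hmp, hrel⟩ := (hsim _ _ hpq).1 _ _ hmq
      refine MIncons.f3 (MConjMust.imust3 hI hmp hmr) ?_
      rintro x ⟨p', r', rfl, hp', hr'⟩
      obtain ⟨q', hq', hrel'⟩ := hrel p' hp'
      exact ih _ ⟨q', r', rfl, hq', hr'⟩ p' q' r' rfl hrel'

lemma mand_right_eps {u u' : U} (h : WeakEps mayR u u') :
    WeakEps (MAndMay I O mustQ mayQ mustR mayR) (CState.right u) (CState.right u') :=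
  weakEps_map CState.right
    (fun _ _ hab => ⟨not_incons_right, not_incons_right, MConjMay.fromQ hab⟩) h

lemma mand_right_tr {u u' : U} {α : Lbl A} (h : WeakTr mayR u α u') :
    WeakTr (MAndMay I O mustQ mayQ mustR mayR) (CState.right u) α (CState.right u') :=
  weakTr_map CState.right
    (fun _ _ _ hab => ⟨not_incons_right, not_incons_right, MConjMay.fromQ hab⟩) h

lemma mand_left_eps {q q' : T} (h : WeakEps mayQ q q') :
    WeakEps (MAndMay I O mustQ mayQ mustR mayR) (CState.left q) (CState.left q') :=
  weakEps_map CState.left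
    (fun _ _ hab => ⟨not_incons_left, not_incons_left, MConjMay.fromP hab⟩) h

lemma mand_left_tr {q q' : T} {α : Lbl A} (h : WeakTr mayQ q α q') :
    WeakTr (MAndMay I O mustQ mayQ mustR mayR) (CState.left q) α (CState.left q') :=
  weakTr_map CState.left
    (fun _ _ _ hab => ⟨not_incons_left, not_incons_left, MConjMay.fromP hab⟩) h

end Aux

/-- The simulation relation witnessing `p ∧ r ⊑ q ∧ r`. -/
inductive CRel {A S T U : Type} (I O : Set A) (mustP : S → A → Set S → Prop)
    (mayP : S → Lbl A → S → Prop) (mustR : U → A → Set U → Prop)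
    (mayR : U → Lbl A → U → Prop) (R : S → T → Prop) : CState S U → CState T U → Prop
  | cc {p q r} : R p q → ¬ MIncons I O mustP mayP mustR mayR (CState.comb p r) →
      CRel I O mustP mayP mustR mayR R (CState.comb p r) (CState.comb q r)
  | ll {p q} : R p q → CRel I O mustP mayP mustR mayR R (CState.left p) (CState.left q)
  | rr {u} : CRel I O mustP mayP mustR mayR R (CState.right u) (CState.right u)
  | cr {p u} : ¬ MIncons I O mustP mayP mustR mayR (CState.comb p u) →
      CRel I O mustP mayP mustR mayR R (CState.comb p u) (CState.right u)

section Main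

variable {A S T U : Type} {I O : Set A}
variable {mustP : S → A → Set S → Prop} {mayP : S → Lbl A → S → Prop}
variable {mustQ : T → A → Set T → Prop} {mayQ : T → Lbl A → T → Prop}
variable {mustR : U → A → Set U → Prop} {mayR : U → Lbl A → U → Prop}
variable {R : S → T → Prop}

lemma main_sim (hP : IsMIA I O mustP mayP) (hQ : IsMIA I O mustQ mayQ)
    (hR : IsMIA I O mustR mayR) (hsim : IsMIASim O mustP mayP mustQ mayQ R) :
    IsMIASim O (MAndMust I O mustP mayP mustR mayR) (MAndMay I O mustP mayP mustR mayR)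
      (MAndMust I O mustQ mayQ mustR mayR) (MAndMay I O mustQ mayQ mustR mayR)
      (CRel I O mustP mayP mustR mayR R) := by
  have mono : ∀ {p q r}, R p q → ¬ MIncons I O mustP mayP mustR mayR (CState.comb p r) →
      ¬ MIncons I O mustQ mayQ mustR mayR (CState.comb q r) := fun hpq hnc hq =>
    hnc (incons_mono hsim hQ.2.1 hR.2.1 hq _ _ _ rfl hpq)
  intro x y hxy
  cases hxy with
  | @ll p q hpq =>
    refine ⟨?_, ?_, ?_⟩
    · rintro a Q'' ⟨-, T', hT', rfl⟩
      cases hT' with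
      | fromP hmq =>
        obtain ⟨P₀, hmp, hrel⟩ := (hsim _ _ hpq).1 _ _ hmq
        refine ⟨_, ⟨not_incons_left, _, MConjMust.fromP hmp, rfl⟩, ?_⟩
        rintro x ⟨⟨p', hp', rfl⟩, -⟩
        obtain ⟨q', hq', hr'⟩ := hrel p' hp'
        exact ⟨CState.left q', ⟨⟨q', hq', rfl⟩, not_incons_left⟩, CRel.ll hr'⟩
    · rintro a s' haO ⟨-, -, hstep⟩
      cases hstep with
      | fromP h =>
        obtain ⟨q', hwq, hr'⟩ := (hsim _ _ hpq).2.1 a _ haO h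
        exact ⟨_, mand_left_tr hwq, CRel.ll hr'⟩
    · rintro s' ⟨-, -, hstep⟩
      cases hstep with
      | fromP h =>
        obtain ⟨q', he, hr'⟩ := (hsim _ _ hpq).2.2 _ h
        exact ⟨_, mand_left_eps he, CRel.ll hr'⟩
  | @rr u =>
    refine ⟨?_, ?_, ?_⟩
    · rintro a Q'' ⟨-, T', hT', rfl⟩
      cases hT' with
      | fromQ hmr =>
        refine ⟨_, ⟨not_incons_right, _, MConjMust.fromQ hmr, rfl⟩, ?_⟩
        rintro x ⟨⟨u', hu', rfl⟩, -⟩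
        exact ⟨CState.right u', ⟨⟨u', hu', rfl⟩, not_incons_right⟩, CRel.rr⟩
    · rintro a s' haO ⟨-, -, hstep⟩
      cases hstep with
      | fromQ h =>
        exact ⟨_, ⟨_, Relation.ReflTransGen.refl,
          not_incons_right, not_incons_right, MConjMay.fromQ h⟩, CRel.rr⟩
    · rintro s' ⟨-, -, hstep⟩
      cases hstep with
      | fromQ h =>
        exact ⟨_, Relation.ReflTransGen.single
          ⟨not_incons_right, not_incons_right, MConjMay.fromQ h⟩, CRel.rr⟩
  | @cr p u hnc =>
    refine ⟨?_, ?_, ?_⟩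
    · rintro a Q'' ⟨-, T', hT', rfl⟩
      cases hT' with
      | fromQ hmr =>
        rcases hR.2.2.2.1 _ _ _ hmr with hI | hO'
        · by_cases hex : ∃ P', mustP p a P'
          · obtain ⟨P₀, hm⟩ := hex
            refine ⟨_, ⟨hnc, _, MConjMust.imust3 hI hm hmr, rfl⟩, ?_⟩
            rintro x ⟨⟨p', u', rfl, hp', hu'⟩, hncx⟩
            exact ⟨CState.right u', ⟨⟨u', hu', rfl⟩, not_incons_right⟩, CRel.cr hncx⟩
          · refine ⟨_, ⟨hnc, _, MConjMust.imust2 hI hex hmr, rfl⟩, ?_⟩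
            rintro x ⟨⟨u', hu', rfl⟩, -⟩
            exact ⟨CState.right u', ⟨⟨u', hu', rfl⟩, not_incons_right⟩, CRel.rr⟩
        · have hpw : ∃ p₀, WeakTr mayP p (some a) p₀ := by
            by_contra hno
            exact hnc (MIncons.f2 hO' hno hmr)
          refine ⟨_, ⟨hnc, _, MConjMust.omust2 hO' hpw hmr, rfl⟩, ?_⟩
          rintro x ⟨⟨p', u', rfl, hwp', hu'⟩, hncx⟩
          exact ⟨CState.right u', ⟨⟨u', hu', rfl⟩, not_incons_right⟩, CRel.cr hncx⟩
    · rintro a s' haO ⟨-, hnc', hstep⟩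
      cases hstep with
      | may3 hmem hwp hwu => exact ⟨_, mand_right_tr hwu, CRel.cr hnc'⟩
      | imay1 hI _ _ => exact absurd haO (Set.disjoint_left.1 hP.1 hI)
      | imay2 hI _ _ => exact absurd haO (Set.disjoint_left.1 hP.1 hI)
      | imay3 hI _ _ => exact absurd haO (Set.disjoint_left.1 hP.1 hI)
    · rintro s' ⟨-, hnc', hstep⟩
      cases hstep with
      | may1 hwp => exact ⟨_, Relation.ReflTransGen.refl, CRel.cr hnc'⟩
      | may2 hwu => exact ⟨_, mand_right_eps (weakTr_none_eps hwu), CRel.cr hnc'⟩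
      | may3 hmem hwp hwu => exact ⟨_, mand_right_eps (weakTr_none_eps hwu), CRel.cr hnc'⟩
  | @cc p q r hpq hnc =>
    have hncQ := mono hpq hnc
    refine ⟨?_, ?_, ?_⟩
    · rintro a Q'' ⟨-, T', hT', rfl⟩
      cases hT' with
      | omust1 hO' hmq hex =>
        obtain ⟨P₀, hmp, hrel⟩ := (hsim _ _ hpq).1 _ _ hmq
        refine ⟨_, ⟨hnc, _, MConjMust.omust1 hO' hmp hex, rfl⟩, ?_⟩
        rintro x ⟨⟨p', r', rfl, hp', hwr'⟩, hncx⟩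
        obtain ⟨q', hq', hr'⟩ := hrel p' hp'
        exact ⟨CState.comb q' r', ⟨⟨q', r', rfl, hq', hwr'⟩, mono hr' hncx⟩, CRel.cc hr' hncx⟩
      | omust2 hO' hexq hmr =>
        have hpw : ∃ p₀, WeakTr mayP p (some a) p₀ := by
          by_contra hno
          exact hnc (MIncons.f2 hO' hno hmr)
        refine ⟨_, ⟨hnc, _, MConjMust.omust2 hO' hpw hmr, rfl⟩, ?_⟩
        rintro x ⟨⟨p', r', rfl, hwp', hr'⟩, hncx⟩
        obtain ⟨q', hwq', hrq'⟩ := sim_weakout hsim hO' hwp' hpq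
        exact ⟨CState.comb q' r', ⟨⟨q', r', rfl, hwq', hr'⟩, mono hrq' hncx⟩, CRel.cc hrq' hncx⟩
      | imust1 hI hmq hno =>
        obtain ⟨P₀, hmp, hrel⟩ := (hsim _ _ hpq).1 _ _ hmq
        refine ⟨_, ⟨hnc, _, MConjMust.imust1 hI hmp hno, rfl⟩, ?_⟩
        rintro x ⟨⟨p', hp', rfl⟩, -⟩
        obtain ⟨q', hq', hr'⟩ := hrel p' hp'
        exact ⟨CState.left q', ⟨⟨q', hq', rfl⟩, not_incons_left⟩, CRel.ll hr'⟩
      | imust2 hI hnoq hmr =>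
        by_cases hex : ∃ P', mustP p a P'
        · obtain ⟨P₀, hm⟩ := hex
          refine ⟨_, ⟨hnc, _, MConjMust.imust3 hI hm hmr, rfl⟩, ?_⟩
          rintro x ⟨⟨p', u', rfl, hp', hu'⟩, hncx⟩
          exact ⟨CState.right u', ⟨⟨u', hu', rfl⟩, not_incons_right⟩, CRel.cr hncx⟩
        · refine ⟨_, ⟨hnc, _, MConjMust.imust2 hI hex hmr, rfl⟩, ?_⟩
          rintro x ⟨⟨u', hu', rfl⟩, -⟩
          exact ⟨CState.right u', ⟨⟨u', hu', rfl⟩, not_incons_right⟩, CRel.rr⟩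
      | imust3 hI hmq hmr =>
        obtain ⟨P₀, hmp, hrel⟩ := (hsim _ _ hpq).1 _ _ hmq
        refine ⟨_, ⟨hnc, _, MConjMust.imust3 hI hmp hmr, rfl⟩, ?_⟩
        rintro x ⟨⟨p', u', rfl, hp', hu'⟩, hncx⟩
        obtain ⟨q', hq', hr'⟩ := hrel p' hp'
        exact ⟨CState.comb q' u', ⟨⟨q', u', rfl, hq', hu'⟩, mono hr' hncx⟩, CRel.cc hr' hncx⟩
    · rintro a s' haO ⟨-, hnc', hstep⟩
      cases hstep with
      | may3 hmem hwp hwr =>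
        obtain ⟨q', hwq, hrq'⟩ := sim_weakout hsim haO hwp hpq
        exact ⟨_, ⟨_, Relation.ReflTransGen.refl,
          hncQ, mono hrq' hnc', MConjMay.may3 (fun x hx => by cases hx; exact haO) hwq hwr⟩,
          CRel.cc hrq' hnc'⟩
      | imay1 hI _ _ => exact absurd haO (Set.disjoint_left.1 hP.1 hI)
      | imay2 hI _ _ => exact absurd haO (Set.disjoint_left.1 hP.1 hI)
      | imay3 hI _ _ => exact absurd haO (Set.disjoint_left.1 hP.1 hI)
    · rintro s' ⟨-, hnc', hstep⟩
      cases hstep with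
      | may1 hwp =>
        obtain ⟨q', heq, hrq'⟩ := sim_weaknone hsim hwp hpq
        rcases weakEps_cases heq with rfl | hwq
        · exact ⟨_, Relation.ReflTransGen.refl, CRel.cc hrq' hnc'⟩
        · exact ⟨_, Relation.ReflTransGen.single
            ⟨hncQ, mono hrq' hnc', MConjMay.may1 hwq⟩, CRel.cc hrq' hnc'⟩
      | may2 hwr =>
        exact ⟨_, Relation.ReflTransGen.single
          ⟨hncQ, mono hpq hnc', MConjMay.may2 hwr⟩, CRel.cc hpq hnc'⟩
      | may3 hmem hwp hwr =>
        obtain ⟨q', heq, hrq'⟩ := sim_weaknone hsim hwp hpq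
        rcases weakEps_cases heq with rfl | hwq
        · exact ⟨_, Relation.ReflTransGen.single
            ⟨hncQ, mono hrq' hnc', MConjMay.may2 hwr⟩, CRel.cc hrq' hnc'⟩
        · exact ⟨_, Relation.ReflTransGen.single
            ⟨hncQ, mono hrq' hnc', MConjMay.may3 (fun x hx => nomatch hx) hwq hwr⟩,
            CRel.cc hrq' hnc'⟩

end Main

/-- Corollary 4.8: MIA-refinement is compositional w.r.t. MIA-conjunction. -/
theorem mia_conj_compositional {A S T U : Type} (I O : Set A)
    (mustP : S → A → Set S → Prop) (mayP : S → Lbl A → S → Prop)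
    (mustQ : T → A → Set T → Prop) (mayQ : T → Lbl A → T → Prop)
    (mustR : U → A → Set U → Prop) (mayR : U → Lbl A → U → Prop)
    (hP : IsMIA I O mustP mayP) (hQ : IsMIA I O mustQ mayQ) (hR : IsMIA I O mustR mayR)
    (p : S) (q : T) (r : U)
    (hpq : MIARef O mustP mayP mustQ mayQ p q)
    (hdef : ¬ MIncons I O mustP mayP mustR mayR (CState.comb p r)) :
    ¬ MIncons I O mustQ mayQ mustR mayR (CState.comb q r) ∧
    MIARef O (MAndMust I O mustP mayP mustR mayR) (MAndMay I O mustP mayP mustR mayR)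
      (MAndMust I O mustQ mayQ mustR mayR) (MAndMay I O mustQ mayQ mustR mayR)
      (CState.comb p r) (CState.comb q r) := by
  obtain ⟨R, hsim, hpq⟩ := hpq
  have hncQ : ¬ MIncons I O mustQ mayQ mustR mayR (CState.comb q r) := fun h =>
    hdef (incons_mono hsim hQ.2.1 hR.2.1 h _ _ _ rfl hpq)
  exact ⟨hncQ, CRel I O mustP mayP mustR mayR R, main_sim hP hQ hR hsim, CRel.cc hpq hdef⟩
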